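/- (First-step bound for exact DPO-Unif.) Let θ^(0) = 0 and let θ^(1) be obtained by one exact DPO-Unif step with learning rate η = 1/(β²A): θ^(1)_a = (4/(βA)) Σ_{a''∈𝒴} Δ(a,a'';θ^(0)) for every a. Then for all a, a' ∈ 𝒴 with r(a) ≥ r(a'), 0 ≤ δ(a,a';θ^(1)) ≤ (1 − 4σ'(1)) (r(a) − r(a')) ≤ 0.214, and moreover |β(θ^(1)_a − θ^(1)_{a'})| ≤ 1.214 for all a, a' ∈ 𝒴. -/

import Mathlib

/-- The sigmoid function. -/
noncomputable def sig (x : ℝ) : ℝ := 1 / (1 + Real.exp (-x))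

/-- The derivative of the sigmoid function. -/
noncomputable def sig' (x : ℝ) : ℝ := sig x * (1 - sig x)

lemma sig_pos (x : ℝ) : 0 < sig x := by unfold sig; positivity

lemma sig_lt_one (x : ℝ) : sig x < 1 := by
  unfold sig
  rw [div_lt_one (by positivity)]
  linarith [Real.exp_pos (-x)]

lemma hasDerivAt_sig (x : ℝ) : HasDerivAt sig (sig' x) x := by
  have h : HasDerivAt (fun y : ℝ => 1 + Real.exp (-y)) (-Real.exp (-x)) x := by
    simpa using ((Real.hasDerivAt_exp (-x)).comp x ((hasDerivAt_id x).neg)).const_add 1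
  have h2 := h.inv (by positivity)
  have hx : (0:ℝ) < 1 + Real.exp (-x) := by positivity
  convert h2 using 1
  case e'_8 => ext y; simp [sig, one_div]
  case e'_9 =>
    simp only [sig', sig]
    field_simp
    ring
  all_goals rfl

lemma sig'_le_quarter (x : ℝ) : sig' x ≤ 1/4 := by
  have := sq_nonneg (sig x - 1/2)
  unfold sig' ; nlinarith

lemma sig'_nonneg (x : ℝ) : 0 ≤ sig' x := by
  have h1 := sig_pos x; have h2 := sig_lt_one x
  unfold sig'; nlinarith

lemma sig_mono {x y : ℝ} (h : x ≤ y) : sig x ≤ sig y := by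
  unfold sig
  gcongr


lemma sig_neg (x : ℝ) : sig (-x) = 1 - sig x := by
  unfold sig
  rw [neg_neg, Real.exp_neg]
  have h := Real.exp_pos x
  field_simp
  ring

lemma sig'_ge_of_abs_le_one {c : ℝ} (h1 : -1 ≤ c) (h2 : c ≤ 1) : sig' 1 ≤ sig' c := by
  have hs1 : sig c ≤ sig 1 := sig_mono h2
  have hs2 : 1 - sig 1 ≤ sig c := by
    have h := sig_mono h1
    rw [show (-1:ℝ) = -(1:ℝ) by norm_num, sig_neg] at h
    linarith
  unfold sig'
  nlinarith

lemma sig_sub_sig {x y : ℝ} (h : y < x) :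
    ∃ c ∈ Set.Ioo y x, sig x - sig y = sig' c * (x - y) := by
  obtain ⟨c, hc, heq⟩ := exists_hasDerivAt_eq_slope sig sig' h
    (fun t _ => (hasDerivAt_sig t).continuousAt.continuousWithinAt)
    (fun t _ => hasDerivAt_sig t)
  refine ⟨c, hc, ?_⟩
  rw [heq]
  have hxy : x - y ≠ 0 := sub_ne_zero.mpr (ne_of_gt h)
  field_simp

lemma term_bounds {u v : ℝ} (h : v ≤ u) (hv : -1 ≤ v) (hu : u ≤ 1) :
    sig' 1 * (u - v) ≤ sig u - sig v ∧ sig u - sig v ≤ (u - v)/4 := by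
  rcases eq_or_lt_of_le h with heq | hlt
  · subst heq; simp
  · obtain ⟨c, hc, heq⟩ := sig_sub_sig hlt
    have hc1 : -1 ≤ c := le_trans hv hc.1.le
    have hc2 : c ≤ 1 := hc.2.le.trans hu
    have hlow := sig'_ge_of_abs_le_one hc1 hc2
    have hup := sig'_le_quarter c
    constructor
    · rw [heq]; nlinarith
    · rw [heq]; nlinarith

lemma sig'_one_lb : (0.1965 : ℝ) ≤ sig' 1 := by
  have hE1 := Real.exp_one_gt_d9
  have hE2 := Real.exp_one_lt_d9
  have hpos : (0:ℝ) < Real.exp 1 := Real.exp_pos 1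
  have hs : sig 1 = Real.exp 1 / (Real.exp 1 + 1) := by
    unfold sig
    rw [Real.exp_neg]
    field_simp
  have h2 : sig' 1 = Real.exp 1 / (Real.exp 1 + 1)^2 := by
    rw [sig', hs]; field_simp; ring
  rw [h2, le_div_iff₀ (by positivity)]
  nlinarith [mul_pos (sub_pos.mpr hE1) (sub_pos.mpr hE2)]

/-- **First-step bound for exact DPO-Unif.**
Starting from `θ⁰ = 0`, after one exact DPO-Unif step with learning rate
`η = 1/(β²A)`, for all `a, a'` with `r(a) ≥ r(a')` one has
`0 ≤ δ(a,a';θ¹) ≤ (1 - 4σ'(1))(r(a) - r(a')) ≤ 0.214`, and all logit gaps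
satisfy `|β(θ¹_a - θ¹_{a'})| ≤ 1.214`. -/
theorem dpo_unif_first_step_bound
    {Y : Type*} [Fintype Y] [Nonempty Y]
    (A : ℕ) (hA : A = Fintype.card Y)
    (r : Y → ℝ) (hr : ∀ a, 0 ≤ r a ∧ r a ≤ 1)
    (β : ℝ) (hβ : 0 < β)
    (θ0 θ1 : Y → ℝ) (hθ0 : θ0 = 0)
    (hupd : ∀ a, θ1 a = θ0 a +
      (4 / (β * A)) * ∑ a'' : Y, (sig (r a - r a'') - sig (β * (θ0 a - θ0 a'')))) :
    (∀ a a' : Y, r a' ≤ r a →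
      0 ≤ r a - r a' - β * (θ1 a - θ1 a') ∧
      r a - r a' - β * (θ1 a - θ1 a') ≤ (1 - 4 * sig' 1) * (r a - r a') ∧
      (1 - 4 * sig' 1) * (r a - r a') ≤ 0.214)
    ∧
    (∀ a a' : Y, |β * (θ1 a - θ1 a')| ≤ 1.214) := by
  subst hθ0
  have hA0 : 0 < A := by rw [hA]; exact Fintype.card_pos
  have hAR : (0:ℝ) < (A:ℝ) := by exact_mod_cast hA0
  have hβA : β * (A:ℝ) ≠ 0 := by positivity
  -- simplify update rule
  have hupd' : ∀ a, θ1 a = (4 / (β * A)) * ∑ a'' : Y, (sig (r a - r a'') - 1/2) := by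
    intro a
    have h := hupd a
    have hsig0 : sig 0 = 1/2 := by unfold sig; norm_num
    simpa [hsig0] using h
  have hgap : ∀ a a' : Y, β * (θ1 a - θ1 a') =
      (4 / A) * ∑ a'' : Y, (sig (r a - r a'') - sig (r a' - r a'')) := by
    intro a a'
    rw [hupd' a, hupd' a', ← mul_sub, ← Finset.sum_sub_distrib]
    have hterm : ∀ a'' : Y, (sig (r a - r a'') - 1/2) - (sig (r a' - r a'') - 1/2)
        = sig (r a - r a'') - sig (r a' - r a'') := fun _ => by ring
    rw [Finset.sum_congr rfl (fun a'' _ => hterm a''), ← mul_assoc]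
    congr 1
    field_simp
  have hq := sig'_le_quarter 1
  have hlb := sig'_one_lb
  have P1 : ∀ a a' : Y, r a' ≤ r a →
      0 ≤ r a - r a' - β * (θ1 a - θ1 a') ∧
      r a - r a' - β * (θ1 a - θ1 a') ≤ (1 - 4 * sig' 1) * (r a - r a') ∧
      (1 - 4 * sig' 1) * (r a - r a') ≤ 0.214 := by
    intro a a' h
    set d := r a - r a' with hd
    have hd0 : 0 ≤ d := by simp [hd]; linarith
    have hd1 : d ≤ 1 := by
      have := (hr a).2; have := (hr a').1; simp [hd]; linarith
    have hterm : ∀ a'' : Y,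
        sig' 1 * d ≤ sig (r a - r a'') - sig (r a' - r a'') ∧
        sig (r a - r a'') - sig (r a' - r a'') ≤ d / 4 := by
      intro a''
      have h1 := (hr a).2; have h2 := (hr a').1; have h3 := (hr a'').1
      have h4 := (hr a'').2
      have hb := term_bounds (u := r a - r a'') (v := r a' - r a'')
        (by linarith) (by linarith) (by linarith)
      constructor
      · have := hb.1; simp only [hd]; linarith [hb.1]
      · have := hb.2; simp only [hd]; linarith [hb.2]
    have hsum_lb : (A:ℝ) * (sig' 1 * d) ≤
        ∑ a'' : Y, (sig (r a - r a'') - sig (r a' - r a'')) := by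
      calc (A:ℝ) * (sig' 1 * d)
          = ∑ _a'' : Y, sig' 1 * d := by
            rw [Finset.sum_const, Finset.card_univ, ← hA, nsmul_eq_mul]
        _ ≤ _ := Finset.sum_le_sum (fun a'' _ => (hterm a'').1)
    have hsum_ub : (∑ a'' : Y, (sig (r a - r a'') - sig (r a' - r a'')))
        ≤ (A:ℝ) * (d / 4) := by
      calc (∑ a'' : Y, (sig (r a - r a'') - sig (r a' - r a'')))
          ≤ ∑ _a'' : Y, d / 4 := Finset.sum_le_sum (fun a'' _ => (hterm a'').2)
        _ = (A:ℝ) * (d / 4) := by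
            rw [Finset.sum_const, Finset.card_univ, ← hA, nsmul_eq_mul]
    have hgap' := hgap a a'
    have h4A : (0:ℝ) < 4 / (A:ℝ) := by positivity
    have hgl : 4 * sig' 1 * d ≤ β * (θ1 a - θ1 a') := by
      rw [hgap']
      have := mul_le_mul_of_nonneg_left hsum_lb (le_of_lt h4A)
      calc 4 * sig' 1 * d = (4 / A) * ((A:ℝ) * (sig' 1 * d)) := by
            field_simp
        _ ≤ _ := this
    have hgu : β * (θ1 a - θ1 a') ≤ d := by
      rw [hgap']
      have := mul_le_mul_of_nonneg_left hsum_ub (le_of_lt h4A)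
      calc (4 / A) * ∑ a'' : Y, (sig (r a - r a'') - sig (r a' - r a''))
          ≤ (4 / A) * ((A:ℝ) * (d / 4)) := this
        _ = d := by field_simp
    refine ⟨by linarith, by nlinarith, ?_⟩
    nlinarith
  refine ⟨P1, ?_⟩
  intro a a'
  have key : ∀ b b' : Y, r b' ≤ r b → |β * (θ1 b - θ1 b')| ≤ 1.214 := by
    intro b b' h
    obtain ⟨h1, h2, _⟩ := P1 b b' h
    have hd1 : r b - r b' ≤ 1 := by
      have := (hr b).2; have := (hr b').1; linarith
    have hd0 : 0 ≤ r b - r b' := by linarith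
    rw [abs_le]
    constructor
    · nlinarith
    · linarith
  rcases le_total (r a') (r a) with h | h
  · exact key a a' h
  · have := key a' a h
    rw [show β * (θ1 a - θ1 a') = -(β * (θ1 a' - θ1 a)) by ring, abs_neg]
    exact this
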